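/- arXiv:math/0503547 — 2 statements merged into one kernel-verified Lean document; each statement's English description precedes it below -/
import Mathlib

section
/- Let E₁₁, E₁₂, E₂₁, E₂₂ be nonnegative real numbers. Then there exists γ > 0 such that γ E₁₁ + E₁₂ < 1 and γ^{−1} E₂₁ + E₂₂ < 1 if and only if max(E₁₂, E₂₂) < 1 and E₁₁ E₂₁ < (1 − E₁₂)(1 − E₂₂). -/
/-- For nonnegative reals `E₁₁, E₁₂, E₂₁, E₂₂`, there exists `γ > 0`
with `γ E₁₁ + E₁₂ < 1` and `γ⁻¹ E₂₁ + E₂₂ < 1` if and only if `max(E₁₂,E₂₂) < 1` and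
`E₁₁ E₂₁ < (1 − E₁₂)(1 − E₂₂)`. -/
theorem stmt16 (E₁₁ E₁₂ E₂₁ E₂₂ : ℝ)
    (h11 : 0 ≤ E₁₁) (h12 : 0 ≤ E₁₂) (h21 : 0 ≤ E₂₁) (h22 : 0 ≤ E₂₂) :
    (∃ γ : ℝ, 0 < γ ∧ γ * E₁₁ + E₁₂ < 1 ∧ γ⁻¹ * E₂₁ + E₂₂ < 1) ↔
      (max E₁₂ E₂₂ < 1 ∧ E₁₁ * E₂₁ < (1 - E₁₂) * (1 - E₂₂)) := by
  constructor
  · rintro ⟨γ, hγ, h1, h2⟩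
    have hγ' : 0 < γ⁻¹ := inv_pos.mpr hγ
    have hA : γ * E₁₁ < 1 - E₁₂ := by linarith
    have hB : γ⁻¹ * E₂₁ < 1 - E₂₂ := by linarith
    have hA0 : 0 ≤ γ * E₁₁ := mul_nonneg hγ.le h11
    have hB0 : 0 ≤ γ⁻¹ * E₂₁ := mul_nonneg hγ'.le h21
    refine ⟨max_lt (by linarith) (by linarith), ?_⟩
    have := mul_lt_mul'' hA hB hA0 hB0
    calc E₁₁ * E₂₁ = (γ * E₁₁) * (γ⁻¹ * E₂₁) := by
          field_simp
      _ < (1 - E₁₂) * (1 - E₂₂) := this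
  · rintro ⟨hmax, hprod⟩
    have ha : 0 < 1 - E₁₂ := by have := max_lt_iff.mp hmax; linarith [this.1]
    have hb : 0 < 1 - E₂₂ := by have := max_lt_iff.mp hmax; linarith [(max_lt_iff.mp hmax).2]
    rcases eq_or_lt_of_le h11 with h0 | h0
    · refine ⟨E₂₁ / (1 - E₂₂) + 1, by positivity, by rw [← h0]; linarith, ?_⟩
      have hγ : (0:ℝ) < E₂₁ / (1 - E₂₂) + 1 := by positivity
      have : (E₂₁ / (1 - E₂₂) + 1)⁻¹ * E₂₁ < 1 - E₂₂ := by
        rw [inv_mul_lt_iff₀ hγ]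
        have h1 : E₂₁ / (1 - E₂₂) * (1 - E₂₂) = E₂₁ := by field_simp
        nlinarith
      linarith
    · set γ := (E₂₁ / (1 - E₂₂) + (1 - E₁₂) / E₁₁) / 2 with hγdef
      have hγ : 0 < γ := by positivity
      refine ⟨γ, hγ, ?_, ?_⟩
      · have : γ * E₁₁ < 1 - E₁₂ := by
          rw [hγdef]
          rw [div_mul_eq_mul_div, div_lt_iff₀ (by norm_num : (0:ℝ) < 2)]
          have h1 : E₂₁ / (1 - E₂₂) * E₁₁ < 1 - E₁₂ := by
            rw [div_mul_eq_mul_div, div_lt_iff₀ hb]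
            nlinarith
          have h2 : (1 - E₁₂) / E₁₁ * E₁₁ = 1 - E₁₂ := by
            field_simp
          nlinarith
        linarith
      · have : γ⁻¹ * E₂₁ < 1 - E₂₂ := by
          rw [inv_mul_lt_iff₀ hγ]
          rw [hγdef]
          rw [div_mul_eq_mul_div, lt_div_iff₀ (by norm_num : (0:ℝ) < 2)]
          have h1 : E₂₁ / (1 - E₂₂) * (1 - E₂₂) = E₂₁ := by field_simp
          have h2 : E₂₁ < (1 - E₁₂) / E₁₁ * (1 - E₂₂) := by
            rw [div_mul_eq_mul_div, lt_div_iff₀ h0]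
            nlinarith
          nlinarith
        linarith
end

section
/- Let p ≥ 1 be an integer, 0 < r ≤ 2, and let e be a real random variable with E(|e|^r) < ∞, P(e = 0) = 0 and P(e ≠ 0) = 1 not degenerate (i.e. e is not almost surely 0). Set p₁ = P(e < 0), p₂ = P(e > 0), E₁ = E(|e|^r 1_{e<0}), E₂ = E(|e|^r 1_{e>0}). Let b_{ji} > 0 for j = 1,2 and i = 1,…,p, and define b*(x) = (Σ_{i=1}^p b_{1i}² x_i²)^{1/2} if x₁ ≤ 0 and b*(x) = (Σ_{i=1}^p b_{2i}² x_i²)^{1/2} if x₁ > 0. Suppose b_{11}^r E₁ + b_{21}^r E₂ + Σ_{i=2}^p (b_{1i}^r p₁ + b_{2i}^r p₂) E(|e|^r) < 1. Then there exist β ∈ (0,1) and positive constants d_{ji} (j = 1,2; i = 1,…,p) such that, with V(x) = Σ_{i=1}^p d_{1i}|x_i|^r for x₁ ≤ 0 and V(x) = Σ_{i=1}^p d_{2i}|x_i|^r for x₁ > 0, one has E(V(b*(x)e, x₁, …, x_{p−1})) ≤ β V(x) for every x = (x₁,…,x_p) ∈ ℝ^p. -/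
open MeasureTheory Finset

private lemma rpow_add_le_add_rpow_real {a b t : ℝ} (ha : 0 ≤ a) (hb : 0 ≤ b)
    (ht : 0 ≤ t) (ht1 : t ≤ 1) : (a + b) ^ t ≤ a ^ t + b ^ t := by
  have h := NNReal.rpow_add_le_add_rpow a.toNNReal b.toNNReal ht ht1
  have h' : (((a.toNNReal + b.toNNReal) ^ t : NNReal) : ℝ)
      ≤ ((a.toNNReal ^ t + b.toNNReal ^ t : NNReal) : ℝ) := by exact_mod_cast h
  rwa [NNReal.coe_add, NNReal.coe_rpow, NNReal.coe_rpow, NNReal.coe_rpow, NNReal.coe_add,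
    Real.coe_toNNReal a ha, Real.coe_toNNReal b hb] at h'

private lemma sum_rpow_le_rpow_sum {ι : Type*} (s : Finset ι) (f : ι → ℝ)
    (hf : ∀ i ∈ s, 0 ≤ f i) {t : ℝ} (ht : 0 < t) (ht1 : t ≤ 1) :
    (∑ i ∈ s, f i) ^ t ≤ ∑ i ∈ s, f i ^ t := by
  classical
  induction s using Finset.induction_on with
  | empty => simp [Real.zero_rpow ht.ne']
  | insert _ _ hnot ih =>
    rename_i a s'
    rw [Finset.sum_insert hnot, Finset.sum_insert hnot]
    have hfa : 0 ≤ f a := hf a (Finset.mem_insert_self a s')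
    have hsum : 0 ≤ ∑ i ∈ s', f i :=
      Finset.sum_nonneg fun i hi => hf i (Finset.mem_insert_of_mem hi)
    calc (f a + ∑ i ∈ s', f i) ^ t ≤ f a ^ t + (∑ i ∈ s', f i) ^ t :=
          rpow_add_le_add_rpow_real hfa hsum ht.le ht1
      _ ≤ f a ^ t + ∑ i ∈ s', f i ^ t := by
          gcongr
          exact ih fun i hi => hf i (Finset.mem_insert_of_mem hi)

set_option maxHeartbeats 1000000 in
/-- Let `p = n+1 ≥ 1`, `0 < r ≤ 2`, and `e` a real random variable
with `E(|e|^r) < ∞`, `P(e = 0) = 0` (so `e` is not almost surely `0`).  Set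
`p₁ = P(e < 0)`, `p₂ = P(e > 0)`, `E₁ = E(|e|^r 1_{e<0})`, `E₂ = E(|e|^r 1_{e>0})`.
Let `b_{ji} > 0` and `b*(x) = (∑ b_{1i}² xᵢ²)^{1/2}` if `x₁ ≤ 0`,
`b*(x) = (∑ b_{2i}² xᵢ²)^{1/2}` if `x₁ > 0`.  If
`b₁₁^r E₁ + b₂₁^r E₂ + ∑_{i=2}^p (b_{1i}^r p₁ + b_{2i}^r p₂) E(|e|^r) < 1`, then there
exist `β ∈ (0,1)` and positive `d_{ji}` such that, with
`V(x) = ∑ d_{1i}|xᵢ|^r` for `x₁ ≤ 0` and `V(x) = ∑ d_{2i}|xᵢ|^r` for `x₁ > 0`,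
`E(V(b*(x)e, x₁,…,x_{p−1})) ≤ β V(x)` for all `x ∈ ℝ^p`.
(Indices `j = 1,2` are `Fin 2`; `i = 1,…,p` is `Fin (n+1)`.) -/
theorem stmt17 {Ω : Type*} [MeasurableSpace Ω] (μ : Measure Ω) [IsProbabilityMeasure μ]
    (n : ℕ) (r : ℝ) (hr0 : 0 < r) (hr2 : r ≤ 2)
    (e : Ω → ℝ) (he : Measurable e) (hmom : Integrable (fun ω => |e ω| ^ r) μ)
    (h0 : μ {ω | e ω = 0} = 0)
    (b : Fin 2 → Fin (n + 1) → ℝ) (hb : ∀ j i, 0 < b j i)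
    (p₁ p₂ E₁ E₂ : ℝ)
    (hp₁ : p₁ = (μ {ω | e ω < 0}).toReal) (hp₂ : p₂ = (μ {ω | 0 < e ω}).toReal)
    (hE₁ : E₁ = ∫ ω in {ω | e ω < 0}, |e ω| ^ r ∂μ)
    (hE₂ : E₂ = ∫ ω in {ω | 0 < e ω}, |e ω| ^ r ∂μ)
    (bstar : (Fin (n + 1) → ℝ) → ℝ)
    (hbstar : ∀ x, bstar x = if x 0 ≤ 0 then Real.sqrt (∑ i, b 0 i ^ 2 * x i ^ 2)
      else Real.sqrt (∑ i, b 1 i ^ 2 * x i ^ 2))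
    (hcond : b 0 0 ^ r * E₁ + b 1 0 ^ r * E₂
        + ∑ i : Fin n, (b 0 i.succ ^ r * p₁ + b 1 i.succ ^ r * p₂)
            * ∫ ω, |e ω| ^ r ∂μ < 1) :
    ∃ β : ℝ, 0 < β ∧ β < 1 ∧
      ∃ d : Fin 2 → Fin (n + 1) → ℝ, (∀ j i, 0 < d j i) ∧
        ∀ x : Fin (n + 1) → ℝ,
          ∫ ω, (∑ i, d (if bstar x * e ω ≤ 0 then 0 else 1) i *
              |(Fin.cons (bstar x * e ω) (fun j : Fin n => x j.castSucc) :
                Fin (n + 1) → ℝ) i| ^ r) ∂μ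
            ≤ β * ∑ i, d (if x 0 ≤ 0 then 0 else 1) i * |x i| ^ r := by
  classical
  set M : ℝ := ∫ ω, |e ω| ^ r ∂μ with hM
  have habs : ∀ ω, 0 ≤ |e ω| ^ r := fun ω => Real.rpow_nonneg (abs_nonneg _) r
  -- measurable sets
  have hZm : MeasurableSet {ω | e ω = 0} := he (measurableSet_singleton 0)
  have hA₀m : MeasurableSet {ω | e ω < 0} := measurableSet_lt he measurable_const
  have hA₂m : MeasurableSet {ω | 0 < e ω} := measurableSet_lt measurable_const he
  have hAm : MeasurableSet {ω | e ω ≤ 0} := measurableSet_le he measurable_const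
  -- M > 0
  have hMpos : 0 < M := by
    rw [hM, MeasureTheory.integral_pos_iff_support_of_nonneg (fun ω => habs ω) hmom]
    have hsupp : Function.support (fun ω => |e ω| ^ r) = {ω | e ω = 0}ᶜ := by
      ext ω
      simp only [Function.mem_support, Set.mem_compl_iff, Set.mem_setOf_eq, ne_eq]
      rw [Real.rpow_eq_zero (abs_nonneg _) hr0.ne', abs_eq_zero]
    rw [hsupp, measure_compl hZm (measure_ne_top _ _), h0, measure_univ, tsub_zero]
    exact zero_lt_one
  -- A = {e ≤ 0} is a.e. equal to {e < 0}
  have hAae : ({ω | e ω ≤ 0} : Set Ω) =ᵐ[μ] {ω | e ω < 0} := by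
    rw [Filter.eventuallyEq_set]
    filter_upwards [measure_eq_zero_iff_ae_notMem.mp h0] with ω hω
    have hne : e ω ≠ 0 := by simpa using hω
    show e ω ≤ 0 ↔ e ω < 0
    exact ⟨fun h => lt_of_le_of_ne h hne, le_of_lt⟩
  have hAc : ({ω | e ω ≤ 0} : Set Ω)ᶜ = {ω | 0 < e ω} := by
    ext ω; simp [not_le]
  have hμA : (μ {ω | e ω ≤ 0}).toReal = p₁ := by
    rw [hp₁, measure_congr hAae]
  have hintA : ∫ ω in {ω | e ω ≤ 0}, |e ω| ^ r ∂μ = E₁ := by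
    rw [hE₁]; exact setIntegral_congr_set hAae
  -- E₁ + E₂ = M, nonneg facts
  have hE₁nn : 0 ≤ E₁ := hE₁ ▸ setIntegral_nonneg hA₀m fun ω _ => habs ω
  have hE₂nn : 0 ≤ E₂ := hE₂ ▸ setIntegral_nonneg hA₂m fun ω _ => habs ω
  have hp₁nn : 0 ≤ p₁ := hp₁ ▸ ENNReal.toReal_nonneg
  have hp₂nn : 0 ≤ p₂ := hp₂ ▸ ENNReal.toReal_nonneg
  have hdisj : Disjoint ({ω | e ω < 0} : Set Ω) {ω | 0 < e ω} := by
    rw [Set.disjoint_left]; intro ω h1 h2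
    simp only [Set.mem_setOf_eq] at h1 h2; linarith
  have hunion : ({ω | e ω < 0} : Set Ω) ∪ {ω | 0 < e ω} = {ω | e ω = 0}ᶜ := by
    ext ω
    simp only [Set.mem_union, Set.mem_setOf_eq, Set.mem_compl_iff, Set.mem_setOf_eq]
    constructor
    · rintro (h | h) h'
      · exact absurd h' h.ne
      · exact absurd h' h.ne'
    · intro h; exact Ne.lt_or_gt h
  have hE₁E₂ : E₁ + E₂ = M := by
    rw [hE₁, hE₂, hM]
    rw [← setIntegral_union hdisj hA₂m (hmom.restrict) (hmom.restrict), hunion]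
    exact setIntegral_eq_integral_of_forall_compl_eq_zero fun ω hω => by
      have hz : e ω = 0 := by simpa using hω
      simp [hz, Real.zero_rpow hr0.ne']
  have hp₁p₂ : p₁ + p₂ ≤ 1 := by
    rw [hp₁, hp₂]
    rw [← ENNReal.toReal_add (measure_ne_top _ _) (measure_ne_top _ _),
      ← measure_union hdisj hA₂m]
    have hle : μ ({ω | e ω < 0} ∪ {ω | 0 < e ω}) ≤ 1 := prob_le_one
    exact ENNReal.toReal_le_of_le_ofReal zero_le_one (by rwa [ENNReal.ofReal_one])
  -- the quantity S and β
  set T : ℝ := ∑ i : Fin n, (b 0 i.succ ^ r * p₁ + b 1 i.succ ^ r * p₂) with hT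
  set S : ℝ := b 0 0 ^ r * E₁ + b 1 0 ^ r * E₂ + T * M with hS
  have hS1 : S < 1 := by
    rw [hS, hT, Finset.sum_mul] at *
    exact hcond
  have hbr : ∀ j i, 0 < b j i ^ r := fun j i => Real.rpow_pos_of_pos (hb j i) r
  have hTnn : 0 ≤ T := Finset.sum_nonneg fun i _ =>
    add_nonneg (mul_nonneg (hbr _ _).le hp₁nn) (mul_nonneg (hbr _ _).le hp₂nn)
  have hApos : 0 < b 0 0 ^ r * E₁ + b 1 0 ^ r * E₂ := by
    have h12 : 0 < E₁ + E₂ := by rw [hE₁E₂]; exact hMpos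
    rcases lt_or_ge 0 E₁ with h | h
    · nlinarith [mul_pos (hbr 0 0) h, mul_nonneg (hbr 1 0).le hE₂nn]
    · have hE2pos : 0 < E₂ := by linarith
      nlinarith [mul_pos (hbr 1 0) hE2pos, mul_nonneg (hbr 0 0).le hE₁nn]
  have hSpos : 0 < S := by
    have : 0 ≤ T * M := mul_nonneg hTnn hMpos.le
    rw [hS]; linarith
  set β : ℝ := S ^ (((n : ℝ) + 2)⁻¹) with hβ
  have hn2 : (0:ℝ) < ((n : ℝ) + 2)⁻¹ := by positivity
  have hβpos : 0 < β := Real.rpow_pos_of_pos hSpos _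
  have hβ1 : β < 1 := Real.rpow_lt_one hSpos.le hS1 hn2
  have hβpow : S ≤ β ^ (n + 1) := by
    rw [hβ, ← Real.rpow_natCast (S ^ (((n : ℝ) + 2)⁻¹)) (n + 1), ← Real.rpow_mul hSpos.le]
    nth_rewrite 1 [show S = S ^ (1:ℝ) from (Real.rpow_one S).symm]
    apply Real.rpow_le_rpow_of_exponent_ge hSpos hS1.le
    rw [inv_mul_eq_div, div_le_one (by positivity)]
    push_cast
    linarith
  -- the coefficients
  set B : ℕ → ℝ := fun k =>
    if h : k < n + 1 then b 0 ⟨k, h⟩ ^ r * p₁ + b 1 ⟨k, h⟩ ^ r * p₂ else 0 with hB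
  have hBnn : ∀ k, 0 ≤ B k := by
    intro k; rw [hB]; dsimp only
    split
    · exact add_nonneg (mul_nonneg (hbr _ _).le hp₁nn) (mul_nonneg (hbr _ _).le hp₂nn)
    · exact le_refl 0
  have hBfin : ∀ i : Fin (n + 1), B i.val = b 0 i ^ r * p₁ + b 1 i ^ r * p₂ := by
    intro i; rw [hB]; simp [i.isLt]
  set Q : ℕ → ℝ := fun m => ∑ k ∈ Finset.Ico m (n + 1), B k / β ^ (k - m + 1) with hQ
  have hQnn : ∀ m, 0 ≤ Q m := fun m =>
    Finset.sum_nonneg fun k _ => div_nonneg (hBnn k) (by positivity)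
  have hQtop : Q (n + 1) = 0 := by rw [hQ]; simp
  have hQrec : ∀ m, m ≤ n → Q m = (B m + Q (m + 1)) / β := by
    intro m hm
    rw [hQ]; dsimp only
    rw [Finset.sum_eq_sum_Ico_succ_bot (by omega : m < n + 1)]
    have hstep : ∀ k ∈ Finset.Ico (m + 1) (n + 1),
        B k / β ^ (k - m + 1) = (B k / β ^ (k - (m + 1) + 1)) / β := by
      intro k hk
      rw [Finset.mem_Ico] at hk
      rw [div_div, ← pow_succ]
      congr 2
      omega
    rw [Finset.sum_congr rfl hstep, ← Finset.sum_div, Nat.sub_self, pow_one, add_div]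
  set d : Fin 2 → Fin (n + 1) → ℝ :=
    fun j i => (b j i ^ r + Q (i.val + 1)) / β with hd
  have hdpos : ∀ j i, 0 < d j i := by
    intro j i; rw [hd]
    exact div_pos (add_pos_of_pos_of_nonneg (hbr j i) (hQnn _)) hβpos
  have hβd : ∀ j i, β * d j i = b j i ^ r + Q (i.val + 1) := by
    intro j i; rw [hd]; field_simp
  -- the constant c' = d 0 0 * E₁ + d 1 0 * E₂ is at most 1
  set c : ℝ := d 0 0 * E₁ + d 1 0 * E₂ with hc
  have hcnn : 0 ≤ c := by
    rw [hc]
    exact add_nonneg (mul_nonneg (hdpos 0 0).le hE₁nn) (mul_nonneg (hdpos 1 0).le hE₂nn)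
  have hcle : c ≤ 1 := by
    have hQ1 : Q 1 ≤ T / β ^ n := by
      have h1 : Q 1 ≤ ∑ k ∈ Finset.Ico 1 (n + 1), B k / β ^ n := by
        rw [hQ]; dsimp only
        apply Finset.sum_le_sum
        intro k hk
        rw [Finset.mem_Ico] at hk
        apply div_le_div_of_nonneg_left (hBnn k) (by positivity)
        apply pow_le_pow_of_le_one hβpos.le hβ1.le
        omega
      have h2 : ∑ k ∈ Finset.Ico 1 (n + 1), B k = T := by
        rw [Finset.sum_Ico_eq_sum_range, hT]
        simp only [Nat.add_sub_cancel]
        rw [Finset.sum_range fun k => B (1 + k)]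
        apply Finset.sum_congr rfl
        intro i _
        rw [show 1 + i.val = (i.succ : Fin (n+1)).val by simp [Nat.add_comm], hBfin]
      rw [← h2, Finset.sum_div]
      exact h1
    have hcβ : c * β = (b 0 0 ^ r * E₁ + b 1 0 ^ r * E₂) + Q 1 * (E₁ + E₂) := by
      rw [hc, hd]; field_simp; simp only [Fin.val_zero, add_zero]; ring
    have hmain : c * β ≤ S / β ^ n := by
      have h3 : Q 1 * (E₁ + E₂) ≤ (T / β ^ n) * M := by
        rw [hE₁E₂]
        exact mul_le_mul_of_nonneg_right hQ1 hMpos.le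
      have h4 : b 0 0 ^ r * E₁ + b 1 0 ^ r * E₂
          ≤ (b 0 0 ^ r * E₁ + b 1 0 ^ r * E₂) / β ^ n := by
        rw [le_div_iff₀ (by positivity)]
        exact mul_le_of_le_one_right hApos.le (pow_le_one₀ hβpos.le hβ1.le)
      rw [hcβ, hS]
      have : (T / β ^ n) * M = T * M / β ^ n := by ring
      rw [add_div]
      linarith
    have h5 : S / β ^ n ≤ β ^ (n + 1) / β ^ n :=
      div_le_div_of_nonneg_right hβpow (by positivity)
    have h6 : (β : ℝ) ^ (n + 1) / β ^ n = β := by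
      rw [pow_succ, mul_div_assoc]
      field_simp
    have : c * β ≤ 1 * β := by
      rw [one_mul]
      calc c * β ≤ S / β ^ n := hmain
        _ ≤ β ^ (n + 1) / β ^ n := h5
        _ = β := h6
    exact le_of_mul_le_mul_right (by linarith) hβpos
  -- key coefficient inequality
  have hkey : ∀ i : Fin n, p₁ * d 0 i.succ + p₂ * d 1 i.succ ≤ Q (i.val + 1) := by
    intro i
    have hrec := hQrec (i.val + 1) (by omega)
    have hsv : (i.succ : Fin (n + 1)).val = i.val + 1 := rfl
    have hdv : ∀ j : Fin 2, d j i.succ = (b j i.succ ^ r + Q (i.val + 1 + 1)) / β := by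
      intro j; rw [hd]; dsimp only; rw [hsv]
    have hBv : B (i.val + 1) = b 0 i.succ ^ r * p₁ + b 1 i.succ ^ r * p₂ := by
      have := hBfin i.succ
      rwa [hsv] at this
    rw [hrec, hdv 0, hdv 1, hBv]
    have hre : p₁ * ((b 0 i.succ ^ r + Q (i.val + 1 + 1)) / β)
        + p₂ * ((b 1 i.succ ^ r + Q (i.val + 1 + 1)) / β)
        = (p₁ * (b 0 i.succ ^ r + Q (i.val + 1 + 1))
          + p₂ * (b 1 i.succ ^ r + Q (i.val + 1 + 1))) / β := by ring
    rw [hre]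
    rw [div_le_div_iff_of_pos_right hβpos]
    nlinarith [hQnn (i.val + 1 + 1), mul_nonneg hp₁nn (hQnn (i.val + 1 + 1)),
      mul_nonneg hp₂nn (hQnn (i.val + 1 + 1))]
  -- now prove the main claim
  refine ⟨β, hβpos, hβ1, d, hdpos, ?_⟩
  intro x
  set jx : Fin 2 := if x 0 ≤ 0 then 0 else 1 with hjx
  set s : ℝ := bstar x with hs
  have hsx : s = Real.sqrt (∑ i, b jx i ^ 2 * x i ^ 2) := by
    rw [hs, hbstar, hjx]
    split_ifs <;> rfl
  have hs0 : 0 ≤ s := by rw [hsx]; exact Real.sqrt_nonneg _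
  have hxnn : ∀ i : Fin (n + 1), 0 ≤ |x i| ^ r := fun i => Real.rpow_nonneg (abs_nonneg _) r
  have hdxnn : 0 ≤ ∑ i, d jx i * |x i| ^ r :=
    Finset.sum_nonneg fun i _ => mul_nonneg (hdpos _ _).le (hxnn i)
  rcases eq_or_lt_of_le hs0 with hseq | hspos
  · -- degenerate case : s = 0, hence x = 0
    have hTnn' : 0 ≤ ∑ i, b jx i ^ 2 * x i ^ 2 :=
      Finset.sum_nonneg fun i _ => by positivity
    have hTsum : ∑ i, b jx i ^ 2 * x i ^ 2 = 0 := by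
      have h' : Real.sqrt (∑ i, b jx i ^ 2 * x i ^ 2) = 0 := by rw [← hsx, ← hseq]
      nlinarith [Real.sq_sqrt hTnn']
    have hx0 : ∀ i, x i = 0 := by
      intro i
      have h' := (Finset.sum_eq_zero_iff_of_nonneg
        (fun i _ => by positivity)).mp hTsum i (Finset.mem_univ i)
      rcases mul_eq_zero.mp h' with h'' | h''
      · exact absurd (pow_eq_zero_iff two_ne_zero |>.mp h'') (hb jx i).ne'
      · exact pow_eq_zero_iff two_ne_zero |>.mp h''
    have hpt0 : ∀ ω : Ω, (∑ i, d (if s * e ω ≤ 0 then 0 else 1) i *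
        |(Fin.cons (s * e ω) (fun j : Fin n => x j.castSucc) :
          Fin (n + 1) → ℝ) i| ^ r) = 0 := by
      intro ω
      apply Finset.sum_eq_zero
      intro i _
      induction i using Fin.cases with
      | zero =>
        rw [Fin.cons_zero, ← hseq, zero_mul, abs_zero, Real.zero_rpow hr0.ne', mul_zero]
      | succ i =>
        rw [Fin.cons_succ, hx0, abs_zero, Real.zero_rpow hr0.ne', mul_zero]
    simp only [hpt0, integral_zero]
    exact mul_nonneg hβpos.le hdxnn
  · -- main case : s > 0
    have hcond' : ∀ ω : Ω, (s * e ω ≤ 0) ↔ (e ω ≤ 0) := by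
      intro ω
      constructor
      · intro h; nlinarith
      · intro h; nlinarith
    set C : Fin 2 → ℝ := fun j' => ∑ i : Fin n, d j' i.succ * |x i.castSucc| ^ r with hC
    have habs' : ∀ ω, |s * e ω| ^ r = s ^ r * |e ω| ^ r := by
      intro ω
      rw [abs_mul, abs_of_nonneg hs0, Real.mul_rpow hs0 (abs_nonneg _)]
    have hpt : ∀ ω : Ω, (∑ i, d (if s * e ω ≤ 0 then 0 else 1) i *
        |(Fin.cons (s * e ω) (fun j : Fin n => x j.castSucc) :
          Fin (n + 1) → ℝ) i| ^ r)
        = if e ω ≤ 0 then d 0 0 * (s ^ r * |e ω| ^ r) + C 0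
          else d 1 0 * (s ^ r * |e ω| ^ r) + C 1 := by
      intro ω
      have hif : (if s * e ω ≤ 0 then (0 : Fin 2) else 1)
          = (if e ω ≤ 0 then (0 : Fin 2) else 1) := by
        simp only [hcond' ω]
      rw [Fin.sum_univ_succ, Fin.cons_zero, hif, habs' ω]
      simp only [Fin.cons_succ]
      by_cases hω : e ω ≤ 0 <;> simp [hω, hC]
    have hint : ∀ (k Cc : ℝ),
        Integrable (fun ω => k * (s ^ r * |e ω| ^ r) + Cc) μ :=
      fun k Cc => ((hmom.const_mul (s ^ r)).const_mul k).add (integrable_const Cc)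
    have hgi : Integrable (fun ω => if e ω ≤ 0 then d 0 0 * (s ^ r * |e ω| ^ r) + C 0
        else d 1 0 * (s ^ r * |e ω| ^ r) + C 1) μ := by
      have heq : (fun ω => if e ω ≤ 0 then d 0 0 * (s ^ r * |e ω| ^ r) + C 0
          else d 1 0 * (s ^ r * |e ω| ^ r) + C 1)
          = fun ω => Set.indicator {ω | e ω ≤ 0}
              (fun ω => d 0 0 * (s ^ r * |e ω| ^ r) + C 0) ω
            + Set.indicator ({ω | e ω ≤ 0}ᶜ)
              (fun ω => d 1 0 * (s ^ r * |e ω| ^ r) + C 1) ω := by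
        funext ω
        simp only [Set.indicator_apply, Set.mem_compl_iff, Set.mem_setOf_eq]
        by_cases hω : e ω ≤ 0 <;> simp [hω]
      rw [heq]
      exact ((hint _ _).indicator hAm).add ((hint _ _).indicator hAm.compl)
    have hsplit : ∫ ω, (if e ω ≤ 0 then d 0 0 * (s ^ r * |e ω| ^ r) + C 0
        else d 1 0 * (s ^ r * |e ω| ^ r) + C 1) ∂μ
        = s ^ r * c + (p₁ * C 0 + p₂ * C 1) := by
      rw [← integral_add_compl hAm hgi]
      have hA1 : ∫ ω in {ω | e ω ≤ 0}, (if e ω ≤ 0 then d 0 0 * (s ^ r * |e ω| ^ r) + C 0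
          else d 1 0 * (s ^ r * |e ω| ^ r) + C 1) ∂μ
          = ∫ ω in {ω | e ω ≤ 0}, (d 0 0 * (s ^ r * |e ω| ^ r) + C 0) ∂μ :=
        setIntegral_congr_fun hAm fun ω hω => if_pos hω
      have hA2 : ∫ ω in ({ω | e ω ≤ 0}ᶜ), (if e ω ≤ 0 then d 0 0 * (s ^ r * |e ω| ^ r) + C 0
          else d 1 0 * (s ^ r * |e ω| ^ r) + C 1) ∂μ
          = ∫ ω in ({ω | e ω ≤ 0}ᶜ), (d 1 0 * (s ^ r * |e ω| ^ r) + C 1) ∂μ :=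
        setIntegral_congr_fun hAm.compl fun ω hω => if_neg (by simpa using hω)
      rw [hA1, hA2]
      have hv1 : ∫ ω in {ω | e ω ≤ 0}, (d 0 0 * (s ^ r * |e ω| ^ r) + C 0) ∂μ
          = d 0 0 * (s ^ r * E₁) + p₁ * C 0 := by
        rw [integral_add (((hmom.const_mul (s ^ r)).const_mul (d 0 0)).restrict)
          (integrable_const _)]
        rw [integral_const_mul, integral_const_mul, hintA, setIntegral_const, smul_eq_mul, measureReal_def, hμA]
      have hv2 : ∫ ω in ({ω | e ω ≤ 0}ᶜ), (d 1 0 * (s ^ r * |e ω| ^ r) + C 1) ∂μ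
          = d 1 0 * (s ^ r * E₂) + p₂ * C 1 := by
        rw [hAc]
        rw [integral_add (((hmom.const_mul (s ^ r)).const_mul (d 1 0)).restrict)
          (integrable_const _)]
        rw [integral_const_mul, integral_const_mul, ← hE₂, setIntegral_const, smul_eq_mul, measureReal_def, ← hp₂]
      rw [hv1, hv2, hc]
      ring
    have hsr : s ^ r ≤ ∑ i, b jx i ^ r * |x i| ^ r := by
      have hTnn' : 0 ≤ ∑ i, b jx i ^ 2 * x i ^ 2 :=
        Finset.sum_nonneg fun i _ => by positivity
      have h1 : s ^ r = (∑ i, b jx i ^ 2 * x i ^ 2) ^ (r / 2) := by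
        rw [hsx, Real.sqrt_eq_rpow, ← Real.rpow_mul hTnn']
        congr 1
        ring
      have h2 : (∑ i, b jx i ^ 2 * x i ^ 2) ^ (r / 2)
          ≤ ∑ i, (b jx i ^ 2 * x i ^ 2) ^ (r / 2) :=
        sum_rpow_le_rpow_sum Finset.univ _ (fun i _ => by positivity)
          (by linarith) (by linarith)
      have h3 : ∀ i : Fin (n + 1), (b jx i ^ 2 * x i ^ 2) ^ (r / 2)
          = b jx i ^ r * |x i| ^ r := by
        intro i
        have hsq : b jx i ^ 2 * x i ^ 2 = (b jx i * |x i|) ^ 2 := by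
          rw [mul_pow, sq_abs]
        rw [hsq, ← Real.rpow_natCast (b jx i * |x i|) 2,
          ← Real.rpow_mul (mul_nonneg (hb jx i).le (abs_nonneg _))]
        rw [show ((2 : ℕ) : ℝ) * (r / 2) = r by push_cast; ring]
        exact Real.mul_rpow (hb jx i).le (abs_nonneg _)
      rw [h1]
      calc (∑ i, b jx i ^ 2 * x i ^ 2) ^ (r / 2)
          ≤ ∑ i, (b jx i ^ 2 * x i ^ 2) ^ (r / 2) := h2
        _ = ∑ i, b jx i ^ r * |x i| ^ r := Finset.sum_congr rfl fun i _ => h3 i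
    have hC0 : p₁ * C 0 + p₂ * C 1
        = ∑ i : Fin n, (p₁ * d 0 i.succ + p₂ * d 1 i.succ) * |x i.castSucc| ^ r := by
      rw [hC]; dsimp only
      rw [Finset.mul_sum, Finset.mul_sum, ← Finset.sum_add_distrib]
      exact Finset.sum_congr rfl fun i _ => by ring
    calc ∫ ω, (∑ i, d (if s * e ω ≤ 0 then 0 else 1) i *
            |(Fin.cons (s * e ω) (fun j : Fin n => x j.castSucc) :
              Fin (n + 1) → ℝ) i| ^ r) ∂μ
        = s ^ r * c + (p₁ * C 0 + p₂ * C 1) := by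
          rw [integral_congr_ae (Filter.Eventually.of_forall hpt)]
          exact hsplit
      _ ≤ (∑ i, b jx i ^ r * |x i| ^ r) * c
            + ∑ i : Fin n, Q (i.val + 1) * |x i.castSucc| ^ r := by
          rw [hC0]
          apply add_le_add (mul_le_mul_of_nonneg_right hsr hcnn)
          apply Finset.sum_le_sum
          intro i _
          exact mul_le_mul_of_nonneg_right (hkey i) (hxnn _)
      _ ≤ β * ∑ i, d jx i * |x i| ^ r := by
          have hRHS : β * ∑ i, d jx i * |x i| ^ r
              = ∑ i, (b jx i ^ r + Q (i.val + 1)) * |x i| ^ r := by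
            rw [Finset.mul_sum]
            exact Finset.sum_congr rfl fun i _ => by rw [← mul_assoc, hβd]
          rw [hRHS, Finset.sum_mul]
          rw [Fin.sum_univ_castSucc
            (f := fun i => (b jx i ^ r + Q (i.val + 1)) * |x i| ^ r)]
          rw [Fin.sum_univ_castSucc (f := fun i => b jx i ^ r * |x i| ^ r * c)]
          have hlast : b jx (Fin.last n) ^ r * |x (Fin.last n)| ^ r * c
              ≤ (b jx (Fin.last n) ^ r + Q ((Fin.last n).val + 1)) * |x (Fin.last n)| ^ r := by
            have h1 : b jx (Fin.last n) ^ r * |x (Fin.last n)| ^ r * c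
                ≤ b jx (Fin.last n) ^ r * |x (Fin.last n)| ^ r :=
              mul_le_of_le_one_right (mul_nonneg (hbr _ _).le (hxnn _)) hcle
            have h2 : 0 ≤ Q ((Fin.last n).val + 1) * |x (Fin.last n)| ^ r :=
              mul_nonneg (hQnn _) (hxnn _)
            rw [add_mul]
            exact le_add_of_le_of_nonneg h1 h2
          have hcs : ∀ i : Fin n,
              b jx i.castSucc ^ r * |x i.castSucc| ^ r * c + Q (i.val + 1) * |x i.castSucc| ^ r
              ≤ (b jx i.castSucc ^ r + Q ((i.castSucc).val + 1)) * |x i.castSucc| ^ r := by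
            intro i
            have hv : (i.castSucc : Fin (n + 1)).val = i.val := rfl
            rw [hv]
            have h1 : b jx i.castSucc ^ r * |x i.castSucc| ^ r * c
                ≤ b jx i.castSucc ^ r * |x i.castSucc| ^ r :=
              mul_le_of_le_one_right (mul_nonneg (hbr _ _).le (hxnn _)) hcle
            rw [add_mul]
            exact add_le_add_left h1 _
          calc ∑ i : Fin n, b jx i.castSucc ^ r * |x i.castSucc| ^ r * c
                + b jx (Fin.last n) ^ r * |x (Fin.last n)| ^ r * c
                + ∑ i : Fin n, Q (i.val + 1) * |x i.castSucc| ^ r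
              = (∑ i : Fin n, (b jx i.castSucc ^ r * |x i.castSucc| ^ r * c
                  + Q (i.val + 1) * |x i.castSucc| ^ r))
                + b jx (Fin.last n) ^ r * |x (Fin.last n)| ^ r * c := by
                rw [Finset.sum_add_distrib]; ring
            _ ≤ (∑ i : Fin n, (b jx i.castSucc ^ r + Q ((i.castSucc).val + 1))
                  * |x i.castSucc| ^ r)
                + (b jx (Fin.last n) ^ r + Q ((Fin.last n).val + 1)) * |x (Fin.last n)| ^ r :=
                add_le_add (Finset.sum_le_sum fun i _ => hcs i) hlast
end
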